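/- Let n ≥ 1 and let S be a skew Boolean algebra freely generated (over the variety of all skew Boolean algebras) by a set of n distinct elements. Then S is finite and its cardinality is |S| = ∏_{m=1}^{n} (m²+1)^{C(n,m)}, where C(n,m) is the binomial coefficient. -/

import Mathlib

universe u

/-- A skew Boolean algebra. -/
class SBA (S : Type u) where
  wedge : S → S → S
  vee : S → S → S
  diff : S → S → S
  zero : S
  wedge_assoc : ∀ x y z : S, wedge (wedge x y) z = wedge x (wedge y z)
  vee_assoc : ∀ x y z : S, vee (vee x y) z = vee x (vee y z)
  absorb1 : ∀ x y : S, wedge x (vee x y) = x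
  absorb2 : ∀ x y : S, wedge (vee y x) x = x
  absorb3 : ∀ x y : S, vee x (wedge x y) = x
  absorb4 : ∀ x y : S, vee (wedge y x) x = x
  sdistrib1 : ∀ x y z : S, wedge x (vee y z) = vee (wedge x y) (wedge x z)
  sdistrib2 : ∀ x y z : S, wedge (vee x y) z = vee (wedge x z) (wedge y z)
  zero_wedge : ∀ x : S, wedge zero x = zero
  wedge_zero : ∀ x : S, wedge x zero = zero
  zero_vee : ∀ x : S, vee zero x = x
  vee_zero : ∀ x : S, vee x zero = x
  diff_ax1 : ∀ x y : S, vee (wedge (wedge x y) x) (diff x y) = x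
  diff_ax2 : ∀ x y : S, wedge (wedge (wedge x y) x) (diff x y) = zero
  diff_ax3 : ∀ x y : S, wedge (diff x y) (wedge (wedge x y) x) = zero

namespace SBA

scoped infixl:70 " ⋏ " => SBA.wedge
scoped infixl:65 " ⋎ " => SBA.vee
scoped infixl:70 " ∖ " => SBA.diff

variable {S : Type u} [SBA S]

/-- Green's relation `D`: `x D y` iff `x⋏y⋏x = x` and `y⋏x⋏y = y`. -/
def Drel (x y : S) : Prop := x ⋏ y ⋏ x = x ∧ y ⋏ x ⋏ y = y

/-- The natural partial order: `x ≤ y` iff `x⋏y = x = y⋏x`. -/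
def nle (x y : S) : Prop := x ⋏ y = x ∧ y ⋏ x = x

/-- An atom: a nonzero element with nothing strictly between it and `0`. -/
def IsAtom (a : S) : Prop := a ≠ zero ∧ ∀ x : S, nle x a → x = zero ∨ x = a

/-- `X` generates `S`: the only subset of `S` containing `X` and `0` and closed
under the three operations is `S` itself. -/
def Generates (X : Set S) : Prop :=
  ∀ T : Set S, X ⊆ T → zero ∈ T →
    (∀ a b : S, a ∈ T → b ∈ T → a ⋏ b ∈ T ∧ a ⋎ b ∈ T ∧ a ∖ b ∈ T) →
    T = Set.univ

/-- A homomorphism of skew Boolean algebras. -/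
def IsHom {T : Type u} [SBA T] (f : S → T) : Prop :=
  (∀ a b : S, f (a ⋏ b) = f a ⋏ f b) ∧ (∀ a b : S, f (a ⋎ b) = f a ⋎ f b) ∧
    (∀ a b : S, f (a ∖ b) = f a ∖ f b) ∧ f zero = zero

end SBA

open SBA

/-- A left-handed skew Boolean algebra. -/
class LeftHanded (S : Type u) [SBA S] : Prop where
  lh_wedge : ∀ x y : S, x ⋏ y ⋏ x = x ⋏ y
  lh_vee : ∀ x y : S, x ⋎ y ⋎ x = y ⋎ x

/-- `S` is freely generated by `X` over the variety of all skew Boolean algebras. -/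
def FreelyGenerates (S : Type u) [SBA S] (X : Set S) : Prop :=
  Generates X ∧
    ∀ (T : Type u) [SBA T], ∀ g : X → T,
      ∃ f : S → T, IsHom f ∧ ∀ x : X, f x = g x

/-- `S` is freely generated by `X` over the variety of left-handed skew Boolean algebras. -/
def LFreelyGenerates (S : Type u) [SBA S] [LeftHanded S] (X : Set S) : Prop :=
  Generates X ∧
    ∀ (T : Type u) [SBA T] [LeftHanded T], ∀ g : X → T,
      ∃ f : S → T, IsHom f ∧ ∀ x : X, f x = g x

namespace SBA

variable {S : Type u} [SBA S]

theorem widem (a : S) : a ⋏ a = a := by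
  have h3 := absorb3 a a
  have h1 := absorb1 a (a ⋏ a)
  rw [h3] at h1; exact h1

theorem videm (a : S) : a ⋎ a = a := by
  have h4 := absorb4 a a
  rw [widem] at h4; exact h4

/-- Two-sided orthogonality. -/
def Orth (a b : S) : Prop := a ⋏ b = zero ∧ b ⋏ a = zero

theorem Orth.symm {a b : S} (h : Orth a b) : Orth b a := ⟨h.2, h.1⟩

theorem orth_zero_left (b : S) : Orth zero b := ⟨zero_wedge b, wedge_zero b⟩

theorem O2 {a b : S} (h : b ⋏ a = zero) (w : S) : a ⋏ w ⋏ b = zero := by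
  set z := a ⋏ w ⋏ b with hz
  have h1 : a ⋏ z = z := by rw [hz, ← wedge_assoc, ← wedge_assoc, widem]
  have h2 : z ⋏ b = z := by rw [hz, wedge_assoc, wedge_assoc, widem, ← wedge_assoc]
  have : z = (z ⋏ b) ⋏ (a ⋏ z) := by rw [h2, h1, widem]
  rw [wedge_assoc, ← wedge_assoc b a, h, zero_wedge, wedge_zero] at this
  exact this

theorem diff_le1 (x y : S) : (x ∖ y) ⋏ x = x ∖ y := by
  have h1 := diff_ax1 x y
  calc (x ∖ y) ⋏ x = (x ∖ y) ⋏ (((x ⋏ y) ⋏ x) ⋎ (x ∖ y)) := by rw [h1]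
    _ = ((x ∖ y) ⋏ ((x ⋏ y) ⋏ x)) ⋎ ((x ∖ y) ⋏ (x ∖ y)) := sdistrib1 _ _ _
    _ = x ∖ y := by rw [diff_ax3, widem, zero_vee]

theorem diff_le2 (x y : S) : x ⋏ (x ∖ y) = x ∖ y := by
  have h1 := diff_ax1 x y
  calc x ⋏ (x ∖ y) = (((x ⋏ y) ⋏ x) ⋎ (x ∖ y)) ⋏ (x ∖ y) := by rw [h1]
    _ = x ∖ y := absorb2 _ _

theorem K1 (x y : S) : (x ∖ y) ⋏ y = zero := by
  have hzx : ((x ∖ y) ⋏ y) ⋏ x = zero := by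
    have h0 : (x ∖ y) ⋏ y = (x ∖ y) ⋏ (x ⋏ y) := by rw [← wedge_assoc, diff_le1]
    rw [h0, wedge_assoc]
    exact diff_ax3 x y
  have hxz : x ⋏ ((x ∖ y) ⋏ y) = (x ∖ y) ⋏ y := by rw [← wedge_assoc, diff_le2]
  calc (x ∖ y) ⋏ y = ((x ∖ y) ⋏ y) ⋏ ((x ∖ y) ⋏ y) := (widem _).symm
    _ = ((x ∖ y) ⋏ y) ⋏ (x ⋏ ((x ∖ y) ⋏ y)) := by rw [hxz]
    _ = (((x ∖ y) ⋏ y) ⋏ x) ⋏ ((x ∖ y) ⋏ y) := (wedge_assoc _ _ _).symm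
    _ = zero := by rw [hzx, zero_wedge]

theorem K2 (x y : S) : y ⋏ (x ∖ y) = zero := by
  have hA : x ⋏ (y ⋏ (x ∖ y)) = zero := by
    have h2 := diff_ax2 x y
    simp only [wedge_assoc] at h2
    rw [diff_le2] at h2
    exact h2
  have hB : (x ∖ y) ⋏ (y ⋏ (x ∖ y)) = zero := by
    rw [← wedge_assoc, K1, zero_wedge]
  have hC : (y ⋏ (x ∖ y)) ⋏ (x ∖ y) = y ⋏ (x ∖ y) := by rw [wedge_assoc, widem]
  calc y ⋏ (x ∖ y) = (y ⋏ (x ∖ y)) ⋏ (y ⋏ (x ∖ y)) := (widem _).symm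
    _ = ((y ⋏ (x ∖ y)) ⋏ (x ∖ y)) ⋏ (y ⋏ (x ∖ y)) := by rw [hC]
    _ = (y ⋏ (x ∖ y)) ⋏ ((x ∖ y) ⋏ (y ⋏ (x ∖ y))) := wedge_assoc _ _ _
    _ = zero := by rw [hB, wedge_zero]

theorem sandwich0 {x y : S} (h : (x ⋏ y) ⋏ x = x) : x ∖ y = zero := by
  have h1 := diff_ax1 x y
  rw [h] at h1
  have h2 := diff_ax2 x y
  rw [h] at h2
  have := absorb2 (x ∖ y) x
  rw [h1] at this
  rw [← this, h2]

theorem diff0 {x y : S} (h : x ∖ y = zero) : (x ⋏ y) ⋏ x = x := by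
  have h1 := diff_ax1 x y
  rw [h, vee_zero] at h1
  exact h1

theorem diff_zero (x : S) : x ∖ zero = x := by
  have h1 := diff_ax1 x zero
  rw [wedge_zero, zero_wedge, zero_vee] at h1
  exact h1

theorem zero_diff (y : S) : (zero : S) ∖ y = zero := by
  have h1 := diff_ax1 zero y
  rw [zero_wedge, zero_wedge, zero_vee] at h1
  exact h1

theorem uniq {x u v w : S} (hx : x = u ⋎ v) (h1 : u ⋏ v = zero) (h2 : v ⋏ u = zero)
    (hx' : x = u ⋎ w) (h3 : u ⋏ w = zero) (h4 : w ⋏ u = zero) : v = w := by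
  have hv : v = v ⋏ w := by
    calc v = v ⋏ v := (widem _).symm
      _ = (v ⋏ u) ⋎ (v ⋏ v) := by rw [h2, zero_vee]
      _ = v ⋏ (u ⋎ v) := (sdistrib1 _ _ _).symm
      _ = v ⋏ (u ⋎ w) := by rw [← hx, hx']
      _ = (v ⋏ u) ⋎ (v ⋏ w) := sdistrib1 _ _ _
      _ = v ⋏ w := by rw [h2, zero_vee]
  have hw : w = v ⋏ w := by
    calc w = (u ⋎ w) ⋏ w := (absorb2 _ _).symm
      _ = (u ⋎ v) ⋏ w := by rw [← hx', hx]
      _ = (u ⋏ w) ⋎ (v ⋏ w) := sdistrib2 _ _ _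
      _ = v ⋏ w := by rw [h3, zero_vee]
  rw [hv, ← hw]

theorem compl_char {x u v : S} (hx : x = u ⋎ v) (h1 : u ⋏ v = zero) (h2 : v ⋏ u = zero) :
    x ∖ u = v := by
  have hxu : x ⋏ u = u := by
    calc x ⋏ u = (u ⋎ v) ⋏ u := by rw [hx]
      _ = (u ⋏ u) ⋎ (v ⋏ u) := sdistrib2 _ _ _
      _ = u := by rw [widem, h2, vee_zero]
  have hux : u ⋏ x = u := by rw [hx]; exact absorb1 _ _
  have hsand : (x ⋏ u) ⋏ x = u := by rw [hxu, hux]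
  have d1 := diff_ax1 x u
  rw [hsand] at d1
  have d2 := diff_ax2 x u
  rw [hsand] at d2
  have d3 := diff_ax3 x u
  rw [hsand] at d3
  exact (uniq hx h1 h2 d1.symm d2 d3).symm

theorem orth_comm {a b : S} (h1 : a ⋏ b = zero) (h2 : b ⋏ a = zero) : a ⋎ b = b ⋎ a := by
  have hxb : (a ⋎ b) ⋏ b = b := absorb2 _ _
  have hbx : b ⋏ (a ⋎ b) = b := by
    rw [sdistrib1, h2, widem, zero_vee]
  have hsand : ((a ⋎ b) ⋏ b) ⋏ (a ⋎ b) = b := by rw [hxb, hbx]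
  have d1 := diff_ax1 (a ⋎ b) b
  rw [hsand] at d1
  have d2 := diff_ax2 (a ⋎ b) b
  rw [hsand] at d2
  have d3 := diff_ax3 (a ⋎ b) b
  rw [hsand] at d3
  have hda : a = (a ⋎ b) ∖ b := by
    have s1 : (a ⋎ b) ∖ b = ((a ⋎ b) ∖ b) ⋏ a := by
      calc (a ⋎ b) ∖ b = ((a ⋎ b) ∖ b) ⋏ (a ⋎ b) := (diff_le1 _ _).symm
        _ = (((a ⋎ b) ∖ b) ⋏ a) ⋎ (((a ⋎ b) ∖ b) ⋏ b) := sdistrib1 _ _ _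
        _ = ((a ⋎ b) ∖ b) ⋏ a := by rw [d3, vee_zero]
    have s2 : a = a ⋏ ((a ⋎ b) ∖ b) := by
      calc a = a ⋏ (a ⋎ b) := (absorb1 _ _).symm
        _ = a ⋏ (b ⋎ ((a ⋎ b) ∖ b)) := by rw [d1]
        _ = (a ⋏ b) ⋎ (a ⋏ ((a ⋎ b) ∖ b)) := sdistrib1 _ _ _
        _ = a ⋏ ((a ⋎ b) ∖ b) := by rw [h1, zero_vee]
    have s3 : (a ⋎ b) ∖ b = a ⋏ ((a ⋎ b) ∖ b) := by
      calc (a ⋎ b) ∖ b = (a ⋎ b) ⋏ ((a ⋎ b) ∖ b) := (diff_le2 _ _).symm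
        _ = (a ⋏ ((a ⋎ b) ∖ b)) ⋎ (b ⋏ ((a ⋎ b) ∖ b)) := sdistrib2 _ _ _
        _ = a ⋏ ((a ⋎ b) ∖ b) := by rw [d2, vee_zero]
    exact s2.trans s3.symm
  conv_rhs => rw [hda]
  rw [d1]

theorem orth_join {a b c : S} (h1 : Orth a b) (h2 : Orth a c) : Orth a (b ⋎ c) := by
  constructor
  · rw [sdistrib1, h1.1, h2.1, zero_vee]
  · rw [sdistrib2, h1.2, h2.2, zero_vee]

theorem le_orth_left {a s w : S} (ha : a ⋏ s = a) (h : s ⋏ w = zero) : a ⋏ w = zero := by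
  rw [← ha, wedge_assoc, h, wedge_zero]

theorem le_orth_right {a s w : S} (ha : s ⋏ a = a) (h : w ⋏ s = zero) : w ⋏ a = zero := by
  rw [← ha, ← wedge_assoc, h, zero_wedge]

theorem KK1 {x y z : S} (hz : (z ⋏ y) ⋏ z = z) : (x ∖ y) ⋏ z = zero := by
  have h1 : ((x ∖ y) ⋏ z) ⋏ y = zero := O2 (K2 x y) z
  calc (x ∖ y) ⋏ z = (x ∖ y) ⋏ ((z ⋏ y) ⋏ z) := by rw [hz]
    _ = (((x ∖ y) ⋏ z) ⋏ y) ⋏ z := by simp only [wedge_assoc]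
    _ = zero := by rw [h1, zero_wedge]

theorem KK2 {x y z : S} (hz : (z ⋏ y) ⋏ z = z) : z ⋏ (x ∖ y) = zero := by
  have h1 : (y ⋏ z) ⋏ (x ∖ y) = zero := O2 (K1 x y) z
  calc z ⋏ (x ∖ y) = ((z ⋏ y) ⋏ z) ⋏ (x ∖ y) := by rw [hz]
    _ = z ⋏ ((y ⋏ z) ⋏ (x ∖ y)) := by simp only [wedge_assoc]
    _ = zero := by rw [h1, wedge_zero]

theorem D1 {u v w : S} (hv : (v ⋏ w) ⋏ v = v) : (u ⋏ v) ∖ w = zero := by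
  have hk1 : ((u ⋏ v) ∖ w) ⋏ v = (u ⋏ v) ∖ w := by
    calc ((u ⋏ v) ∖ w) ⋏ v = (((u ⋏ v) ∖ w) ⋏ (u ⋏ v)) ⋏ v := by rw [diff_le1]
      _ = ((u ⋏ v) ∖ w) ⋏ (u ⋏ (v ⋏ v)) := by simp only [wedge_assoc]
      _ = ((u ⋏ v) ∖ w) ⋏ (u ⋏ v) := by rw [widem]
      _ = (u ⋏ v) ∖ w := diff_le1 _ _
  have h2 : (((u ⋏ v) ∖ w) ⋏ v) ⋏ w = zero := O2 (K2 (u ⋏ v) w) v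
  calc (u ⋏ v) ∖ w = (((u ⋏ v) ∖ w) ⋏ v) := hk1.symm
    _ = ((u ⋏ v) ∖ w) ⋏ ((v ⋏ w) ⋏ v) := by rw [hv]
    _ = ((((u ⋏ v) ∖ w) ⋏ v) ⋏ w) ⋏ v := by simp only [wedge_assoc]
    _ = zero := by rw [h2, zero_wedge]

theorem D1' {u v w : S} (hu : (u ⋏ w) ⋏ u = u) : (u ⋏ v) ∖ w = zero := by
  have hk : (u ⋏ v) ⋏ ((u ⋏ v) ∖ w) = (u ⋏ v) ∖ w := diff_le2 _ _
  calc (u ⋏ v) ∖ w = (u ⋏ v) ⋏ ((u ⋏ v) ∖ w) := hk.symm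
    _ = (((u ⋏ w) ⋏ u) ⋏ v) ⋏ ((u ⋏ v) ∖ w) := by rw [hu]
    _ = (u ⋏ w) ⋏ ((u ⋏ v) ⋏ ((u ⋏ v) ∖ w)) := by simp only [wedge_assoc]
    _ = (u ⋏ w) ⋏ ((u ⋏ v) ∖ w) := by rw [hk]
    _ = u ⋏ (w ⋏ ((u ⋏ v) ∖ w)) := wedge_assoc _ _ _
    _ = zero := by rw [K2, wedge_zero]

theorem H {P xx z : S} (hz : z ⋏ xx = z) : (P ⋏ xx) ⋏ z = P ⋏ z := by
  have hd : (P ∖ xx) ⋏ z = zero := by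
    have : ((P ∖ xx) ⋏ z) ⋏ xx = zero := O2 (K2 P xx) z
    rw [← hz, ← wedge_assoc, this]
  have hplus : P ⋏ z = ((P ⋏ xx) ⋏ P) ⋏ z := by
    conv_lhs => rw [← diff_ax1 P xx]
    rw [sdistrib2, hd, vee_zero]
  have hRT : (P ⋏ xx) ⋏ ((P ⋏ xx) ⋏ P) = (P ⋏ xx) ⋏ P := by
    rw [← wedge_assoc, widem]
  have hTR : ((P ⋏ xx) ⋏ P) ⋏ (P ⋏ xx) = P ⋏ xx := by
    calc ((P ⋏ xx) ⋏ P) ⋏ (P ⋏ xx) = (P ⋏ xx) ⋏ ((P ⋏ P) ⋏ xx) := by simp only [wedge_assoc]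
      _ = (P ⋏ xx) ⋏ (P ⋏ xx) := by rw [widem]
      _ = P ⋏ xx := widem _
  have hRvT : (P ⋏ xx) ⋎ ((P ⋏ xx) ⋏ P) = P ⋏ xx := absorb3 _ _
  have hTvR : ((P ⋏ xx) ⋏ P) ⋎ (P ⋏ xx) = (P ⋏ xx) ⋏ P := by
    have := absorb3 ((P ⋏ xx) ⋏ P) (P ⋏ xx)
    rw [hTR] at this
    exact this
  -- α := (P⋏xx)⋏z, β := ((P⋏xx)⋏P)⋏z
  have hab : ((P ⋏ xx) ⋏ z) ⋎ (((P ⋏ xx) ⋏ P) ⋏ z) = (P ⋏ xx) ⋏ z := by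
    rw [← sdistrib2, hRvT]
  have hba : (((P ⋏ xx) ⋏ P) ⋏ z) ⋎ ((P ⋏ xx) ⋏ z) = ((P ⋏ xx) ⋏ P) ⋏ z := by
    rw [← sdistrib2, hTvR]
  have h6 : ((P ⋏ xx) ⋏ z) ⋏ (((P ⋏ xx) ⋏ P) ⋏ z) = ((P ⋏ xx) ⋏ P) ⋏ z := by
    have := absorb2 (((P ⋏ xx) ⋏ P) ⋏ z) ((P ⋏ xx) ⋏ z)
    rw [hab] at this
    exact this
  have hbz : (((P ⋏ xx) ⋏ P) ⋏ z) ⋎ z = z := absorb4 _ _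
  have haz : ((P ⋏ xx) ⋏ z) ⋏ z = (P ⋏ xx) ⋏ z := by rw [wedge_assoc, widem]
  calc (P ⋏ xx) ⋏ z = ((P ⋏ xx) ⋏ z) ⋏ z := haz.symm
    _ = ((P ⋏ xx) ⋏ z) ⋏ ((((P ⋏ xx) ⋏ P) ⋏ z) ⋎ z) := by rw [hbz]
    _ = (((P ⋏ xx) ⋏ z) ⋏ (((P ⋏ xx) ⋏ P) ⋏ z)) ⋎ (((P ⋏ xx) ⋏ z) ⋏ z) := sdistrib1 _ _ _
    _ = (((P ⋏ xx) ⋏ P) ⋏ z) ⋎ ((P ⋏ xx) ⋏ z) := by rw [h6, haz]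
    _ = ((P ⋏ xx) ⋏ P) ⋏ z := hba
    _ = P ⋏ z := hplus.symm

theorem le_pre_trans {c z w : S} (h1 : c ⋏ z = c) (h2 : z ⋏ c = c) (h3 : (z ⋏ w) ⋏ z = z) :
    (c ⋏ w) ⋏ c = c := by
  calc (c ⋏ w) ⋏ c = (c ⋏ w) ⋏ (z ⋏ c) := by rw [h2]
    _ = ((c ⋏ z) ⋏ w) ⋏ (z ⋏ c) := by rw [h1]
    _ = c ⋏ (((z ⋏ w) ⋏ z) ⋏ c) := by simp only [wedge_assoc]
    _ = c ⋏ (z ⋏ c) := by rw [h3]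
    _ = c ⋏ c := by rw [h2]
    _ = c := widem c

theorem pre_meet {z u v : S} (h1 : (z ⋏ u) ⋏ z = z) (h2 : (z ⋏ v) ⋏ z = z) :
    (z ⋏ (u ⋏ v)) ⋏ z = z := by
  have hvz : (v ⋏ z) ⋏ z = v ⋏ z := by rw [wedge_assoc, widem]
  have hH := H (P := z ⋏ u) (xx := z) (z := v ⋏ z) hvz
  rw [h1] at hH
  have hzv : z ⋏ (v ⋏ z) = z := by rw [← wedge_assoc]; exact h2
  rw [hzv] at hH
  calc (z ⋏ (u ⋏ v)) ⋏ z = (z ⋏ u) ⋏ (v ⋏ z) := by simp only [wedge_assoc]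
    _ = z := hH.symm

theorem presub {p D J : S} (h1 : (p ⋏ D) ⋏ p = p) (h2 : p ⋏ J = zero) (h3 : J ⋏ p = zero) :
    (p ⋏ (D ∖ J)) ⋏ p = p := by
  have e1 : p ⋏ D = (p ⋏ ((D ⋏ J) ⋏ D)) ⋎ (p ⋏ (D ∖ J)) := by rw [← sdistrib1, diff_ax1]
  have e2 : p ⋏ ((D ⋏ J) ⋏ D) = zero := by
    have hO : (p ⋏ D) ⋏ J = zero := O2 h3 D
    calc p ⋏ ((D ⋏ J) ⋏ D) = ((p ⋏ D) ⋏ J) ⋏ D := by simp only [wedge_assoc]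
      _ = zero := by rw [hO, zero_wedge]
  have : p = (p ⋏ (D ∖ J)) ⋏ p := by
    calc p = (p ⋏ D) ⋏ p := h1.symm
      _ = ((p ⋏ ((D ⋏ J) ⋏ D)) ⋎ (p ⋏ (D ∖ J))) ⋏ p := by rw [← e1]
      _ = (zero ⋎ (p ⋏ (D ∖ J))) ⋏ p := by rw [e2]
      _ = (p ⋏ (D ∖ J)) ⋏ p := by rw [zero_vee]
  exact this.symm

theorem join_of_Drel {p q : S} (hp : (p ⋏ q) ⋏ p = p) (hq : (q ⋏ p) ⋏ q = q) :
    p ⋎ q = q ⋏ p := by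
  have hjt : (p ⋎ q) ⋏ (q ⋏ p) = q ⋏ p := by
    rw [← wedge_assoc, absorb2]
  have hpt : p ⋎ (q ⋏ p) = q ⋏ p := by
    have h' : (p ⋎ q) ⋏ (q ⋏ p) = (p ⋏ (q ⋏ p)) ⋎ (q ⋏ (q ⋏ p)) := sdistrib2 _ _ _
    rw [← wedge_assoc p q p, hp, ← wedge_assoc q q p, widem, hjt] at h'
    exact h'.symm
  have htj : (q ⋏ p) ⋏ (p ⋎ q) = q ⋏ p := by rw [wedge_assoc, absorb1]
  have hsand : ((p ⋎ q) ⋏ (q ⋏ p)) ⋏ (p ⋎ q) = q ⋏ p := by rw [hjt, htj]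
  have d1 := diff_ax1 (p ⋎ q) (q ⋏ p)
  rw [hsand] at d1
  have d2 := diff_ax2 (p ⋎ q) (q ⋏ p)
  rw [hsand] at d2
  have d3 := diff_ax3 (p ⋎ q) (q ⋏ p)
  rw [hsand] at d3
  have hjp : (p ⋎ q) ⋏ p = q ⋏ p := by
    rw [sdistrib2, widem, hpt]
  have hdp : ((p ⋎ q) ∖ (q ⋏ p)) ⋏ p = zero := by
    calc ((p ⋎ q) ∖ (q ⋏ p)) ⋏ p = (((p ⋎ q) ∖ (q ⋏ p)) ⋏ (p ⋎ q)) ⋏ p := by rw [diff_le1]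
      _ = ((p ⋎ q) ∖ (q ⋏ p)) ⋏ ((p ⋎ q) ⋏ p) := wedge_assoc _ _ _
      _ = ((p ⋎ q) ∖ (q ⋏ p)) ⋏ (q ⋏ p) := by rw [hjp]
      _ = zero := d3
  have hpd : p ⋏ ((p ⋎ q) ∖ (q ⋏ p)) = zero := by
    have := O2 hdp p
    rw [widem] at this
    exact this
  have hδq : (p ⋎ q) ∖ (q ⋏ p) = ((p ⋎ q) ∖ (q ⋏ p)) ⋏ q := by
    calc (p ⋎ q) ∖ (q ⋏ p) = ((p ⋎ q) ∖ (q ⋏ p)) ⋏ (p ⋎ q) := (diff_le1 _ _).symm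
      _ = (((p ⋎ q) ∖ (q ⋏ p)) ⋏ p) ⋎ (((p ⋎ q) ∖ (q ⋏ p)) ⋏ q) := sdistrib1 _ _ _
      _ = ((p ⋎ q) ∖ (q ⋏ p)) ⋏ q := by rw [hdp, zero_vee]
  have hδ0 : (p ⋎ q) ∖ (q ⋏ p) = zero := by
    calc (p ⋎ q) ∖ (q ⋏ p) = ((p ⋎ q) ∖ (q ⋏ p)) ⋏ q := hδq
      _ = ((p ⋎ q) ∖ (q ⋏ p)) ⋏ ((q ⋏ p) ⋏ q) := by rw [hq]
      _ = (((p ⋎ q) ∖ (q ⋏ p)) ⋏ (q ⋏ p)) ⋏ q := (wedge_assoc _ _ _).symm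
      _ = zero := by rw [d3, zero_wedge]
  rw [hδ0, vee_zero] at d1
  exact d1.symm

end SBA

/-! ### Concrete model: primitive algebras, products, ULift -/

def Prim (α : Type v) : Type v := Option (α × α)

namespace Prim

variable {α : Type v}

def pw : Prim α → Prim α → Prim α
  | some p, some q => some (p.1, q.2)
  | _, _ => none

def pv : Prim α → Prim α → Prim α
  | none, y => y
  | some p, none => some p
  | some p, some q => some (q.1, p.2)

def pd : Prim α → Prim α → Prim α
  | x, none => x
  | _, some _ => none

instance instSBA : SBA (Prim α) where
  wedge := pw
  vee := pv
  diff := pd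
  zero := none
  wedge_assoc := by rintro (_|⟨a,b⟩) (_|⟨c,d⟩) (_|⟨e,f⟩) <;> rfl
  vee_assoc := by rintro (_|⟨a,b⟩) (_|⟨c,d⟩) (_|⟨e,f⟩) <;> rfl
  absorb1 := by rintro (_|⟨a,b⟩) (_|⟨c,d⟩) <;> rfl
  absorb2 := by rintro (_|⟨a,b⟩) (_|⟨c,d⟩) <;> rfl
  absorb3 := by rintro (_|⟨a,b⟩) (_|⟨c,d⟩) <;> rfl
  absorb4 := by rintro (_|⟨a,b⟩) (_|⟨c,d⟩) <;> rfl
  sdistrib1 := by rintro (_|⟨a,b⟩) (_|⟨c,d⟩) (_|⟨e,f⟩) <;> rfl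
  sdistrib2 := by rintro (_|⟨a,b⟩) (_|⟨c,d⟩) (_|⟨e,f⟩) <;> rfl
  zero_wedge := by rintro (_|⟨a,b⟩) <;> rfl
  wedge_zero := by rintro (_|⟨a,b⟩) <;> rfl
  zero_vee := by rintro (_|⟨a,b⟩) <;> rfl
  vee_zero := by rintro (_|⟨a,b⟩) <;> rfl
  diff_ax1 := by rintro (_|⟨a,b⟩) (_|⟨c,d⟩) <;> rfl
  diff_ax2 := by rintro (_|⟨a,b⟩) (_|⟨c,d⟩) <;> rfl
  diff_ax3 := by rintro (_|⟨a,b⟩) (_|⟨c,d⟩) <;> rfl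

end Prim

instance instSBAPi {ι : Type v} {π : ι → Type w} [∀ i, SBA (π i)] : SBA (∀ i, π i) where
  wedge f g := fun i => f i ⋏ g i
  vee f g := fun i => f i ⋎ g i
  diff f g := fun i => f i ∖ g i
  zero := fun _ => SBA.zero
  wedge_assoc := by intros; funext i; exact SBA.wedge_assoc _ _ _
  vee_assoc := by intros; funext i; exact SBA.vee_assoc _ _ _
  absorb1 := by intros; funext i; exact SBA.absorb1 _ _
  absorb2 := by intros; funext i; exact SBA.absorb2 _ _
  absorb3 := by intros; funext i; exact SBA.absorb3 _ _
  absorb4 := by intros; funext i; exact SBA.absorb4 _ _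
  sdistrib1 := by intros; funext i; exact SBA.sdistrib1 _ _ _
  sdistrib2 := by intros; funext i; exact SBA.sdistrib2 _ _ _
  zero_wedge := by intros; funext i; exact SBA.zero_wedge _
  wedge_zero := by intros; funext i; exact SBA.wedge_zero _
  zero_vee := by intros; funext i; exact SBA.zero_vee _
  vee_zero := by intros; funext i; exact SBA.vee_zero _
  diff_ax1 := by intros; funext i; exact SBA.diff_ax1 _ _
  diff_ax2 := by intros; funext i; exact SBA.diff_ax2 _ _
  diff_ax3 := by intros; funext i; exact SBA.diff_ax3 _ _

instance instSBAULift {T : Type v} [SBA T] : SBA (ULift.{w} T) where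
  wedge a b := ⟨a.down ⋏ b.down⟩
  vee a b := ⟨a.down ⋎ b.down⟩
  diff a b := ⟨a.down ∖ b.down⟩
  zero := ⟨SBA.zero⟩
  wedge_assoc := by intros; exact congrArg ULift.up (SBA.wedge_assoc _ _ _)
  vee_assoc := by intros; exact congrArg ULift.up (SBA.vee_assoc _ _ _)
  absorb1 := by intros; exact congrArg ULift.up (SBA.absorb1 _ _)
  absorb2 := by intros; exact congrArg ULift.up (SBA.absorb2 _ _)
  absorb3 := by intros; exact congrArg ULift.up (SBA.absorb3 _ _)
  absorb4 := by intros; exact congrArg ULift.up (SBA.absorb4 _ _)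
  sdistrib1 := by intros; exact congrArg ULift.up (SBA.sdistrib1 _ _ _)
  sdistrib2 := by intros; exact congrArg ULift.up (SBA.sdistrib2 _ _ _)
  zero_wedge := by intros; exact congrArg ULift.up (SBA.zero_wedge _)
  wedge_zero := by intros; exact congrArg ULift.up (SBA.wedge_zero _)
  zero_vee := by intros; exact congrArg ULift.up (SBA.zero_vee _)
  vee_zero := by intros; exact congrArg ULift.up (SBA.vee_zero _)
  diff_ax1 := by intros; exact congrArg ULift.up (SBA.diff_ax1 _ _)
  diff_ax2 := by intros; exact congrArg ULift.up (SBA.diff_ax2 _ _)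
  diff_ax3 := by intros; exact congrArg ULift.up (SBA.diff_ax3 _ _)

/-! ### Generic terms over an SBA with `n` generators -/

section Terms

variable {T : Type v} [SBA T] {n : ℕ}

/-- Join of a list of elements. -/
def joinList : List T → T
  | [] => SBA.zero
  | a :: l => a ⋎ joinList l

theorem joinList_append (P Q : List T) :
    joinList (P ++ Q) = joinList P ⋎ joinList Q := by
  induction P with
  | nil => simp [joinList, zero_vee]
  | cons a P ih => simp [joinList, ih, vee_assoc]

theorem joinList_eq_zero {L : List T} (h : ∀ t ∈ L, t = SBA.zero) :
    joinList L = SBA.zero := by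
  induction L with
  | nil => rfl
  | cons a L ih =>
      simp only [joinList]
      rw [h a (List.mem_cons_self), ih (fun t ht => h t (List.mem_cons_of_mem a ht)),
        zero_vee]

theorem wedge_joinList (r : T) (L : List T) :
    r ⋏ joinList L = joinList (L.map (fun t => r ⋏ t)) := by
  induction L with
  | nil => simpa [joinList] using wedge_zero r
  | cons a L ih => simp only [joinList, List.map_cons, sdistrib1, ih]

theorem joinList_wedge (r : T) (L : List T) :
    joinList L ⋏ r = joinList (L.map (fun t => t ⋏ r)) := by
  induction L with
  | nil => simpa [joinList] using zero_wedge r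
  | cons a L ih => simp only [joinList, List.map_cons, sdistrib2, ih]

theorem wedge_joinList_zero {r : T} {L : List T} (h : ∀ t ∈ L, r ⋏ t = SBA.zero) :
    r ⋏ joinList L = SBA.zero := by
  rw [wedge_joinList]
  apply joinList_eq_zero
  intro t ht
  obtain ⟨a, ha, rfl⟩ := List.mem_map.1 ht
  exact h a ha

theorem joinList_wedge_zero {r : T} {L : List T} (h : ∀ t ∈ L, t ⋏ r = SBA.zero) :
    joinList L ⋏ r = SBA.zero := by
  rw [joinList_wedge]
  apply joinList_eq_zero
  intro t ht
  obtain ⟨a, ha, rfl⟩ := List.mem_map.1 ht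
  exact h a ha

theorem joinList_map_congr {ι' : Type w} {L : List ι'} {f g : ι' → T}
    (h : ∀ i ∈ L, f i = g i) : joinList (L.map f) = joinList (L.map g) := by
  rw [List.map_congr_left h]

/-- Pointwise meet of aligned joins of cross-orthogonal families. -/
theorem joinList_wedge_joinList {ι' : Type w} (L : List ι') (hN : L.Nodup) (f g : ι' → T)
    (hO : ∀ i ∈ L, ∀ j ∈ L, i ≠ j → Orth (f i) (g j)) :
    joinList (L.map f) ⋏ joinList (L.map g) = joinList (L.map (fun i => f i ⋏ g i)) := by
  induction L with
  | nil => simpa [joinList] using zero_wedge _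
  | cons a L ih =>
      have hNa : a ∉ L := (List.nodup_cons.1 hN).1
      have hN' : L.Nodup := (List.nodup_cons.1 hN).2
      have h1 : f a ⋏ joinList (L.map g) = SBA.zero := by
        apply wedge_joinList_zero
        intro t ht
        obtain ⟨j, hj, rfl⟩ := List.mem_map.1 ht
        exact (hO a (List.mem_cons_self) j (List.mem_cons_of_mem a hj)
          (fun h => hNa (h ▸ hj))).1
      have h2 : joinList (L.map f) ⋏ g a = SBA.zero := by
        apply joinList_wedge_zero
        intro t ht
        obtain ⟨j, hj, rfl⟩ := List.mem_map.1 ht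
        exact (hO j (List.mem_cons_of_mem a hj) a (List.mem_cons_self)
          (fun h => hNa (h ▸ hj))).1
      have ih' := ih hN' (fun i hi j hj hij =>
        hO i (List.mem_cons_of_mem a hi) j (List.mem_cons_of_mem a hj) hij)
      simp only [joinList, List.map_cons]
      rw [sdistrib2, sdistrib1, sdistrib1, h1, h2, vee_zero, zero_vee, ih']

/-- Pointwise join of aligned joins of cross-orthogonal families. -/
theorem joinList_vee_joinList {ι' : Type w} (L : List ι') (hN : L.Nodup) (f g : ι' → T)
    (hO : ∀ i ∈ L, ∀ j ∈ L, i ≠ j → Orth (f i) (g j)) :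
    joinList (L.map f) ⋎ joinList (L.map g) = joinList (L.map (fun i => f i ⋎ g i)) := by
  induction L with
  | nil => simpa [joinList] using zero_vee _
  | cons a L ih =>
      have hNa : a ∉ L := (List.nodup_cons.1 hN).1
      have hN' : L.Nodup := (List.nodup_cons.1 hN).2
      have h1 : joinList (L.map f) ⋏ g a = SBA.zero := by
        apply joinList_wedge_zero
        intro t ht
        obtain ⟨j, hj, rfl⟩ := List.mem_map.1 ht
        exact (hO j (List.mem_cons_of_mem a hj) a (List.mem_cons_self)
          (fun h => hNa (h ▸ hj))).1
      have h2 : g a ⋏ joinList (L.map f) = SBA.zero := by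
        apply wedge_joinList_zero
        intro t ht
        obtain ⟨j, hj, rfl⟩ := List.mem_map.1 ht
        exact (hO j (List.mem_cons_of_mem a hj) a (List.mem_cons_self)
          (fun h => hNa (h ▸ hj))).2
      have hcomm : joinList (L.map f) ⋎ g a = g a ⋎ joinList (L.map f) :=
        orth_comm h1 h2
      have ih' := ih hN' (fun i hi j hj hij =>
        hO i (List.mem_cons_of_mem a hi) j (List.mem_cons_of_mem a hj) hij)
      simp only [joinList, List.map_cons]
      calc f a ⋎ joinList (L.map f) ⋎ (g a ⋎ joinList (L.map g))
          = f a ⋎ ((joinList (L.map f) ⋎ g a) ⋎ joinList (L.map g)) := by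
            simp only [vee_assoc]
        _ = f a ⋎ ((g a ⋎ joinList (L.map f)) ⋎ joinList (L.map g)) := by rw [hcomm]
        _ = (f a ⋎ g a) ⋎ (joinList (L.map f) ⋎ joinList (L.map g)) := by
            simp only [vee_assoc]
        _ = (f a ⋎ g a) ⋎ joinList (L.map (fun i => f i ⋎ g i)) := by rw [ih']

/-- Meet of a list of generators. -/
def listMeet (y : Fin n → T) : List (Fin n) → T
  | [] => SBA.zero
  | [i] => y i
  | i :: j :: l => y i ⋏ listMeet y (j :: l)

/-- Join of a list of generators. -/
def listJoin (y : Fin n → T) : List (Fin n) → T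
  | [] => SBA.zero
  | i :: l => y i ⋎ listJoin y l

theorem listMeet_diff_eq_zero (y : Fin n → T) {l : List (Fin n)} {b : Fin n} (hb : b ∈ l) :
    listMeet y l ∖ y b = SBA.zero := by
  induction l with
  | nil => cases hb
  | cons i l ih =>
      cases l with
      | nil =>
          have : b = i := by simpa using hb
          subst this
          have : (y b ⋏ y b) ⋏ y b = y b := by rw [widem, widem]
          exact sandwich0 this
      | cons j l' =>
          show (y i ⋏ listMeet y (j :: l')) ∖ y b = SBA.zero
          rcases List.mem_cons.1 hb with hbi | hbl
          · subst hbi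
            exact D1' (by rw [widem, widem])
          · exact D1 (diff0 (ih hbl))

theorem listMeet_pre (y : Fin n → T) {l : List (Fin n)} {b : Fin n} (hb : b ∈ l) :
    (listMeet y l ⋏ y b) ⋏ listMeet y l = listMeet y l :=
  diff0 (listMeet_diff_eq_zero y hb)

theorem listJoin_pre (y : Fin n → T) {l : List (Fin n)} {b : Fin n} (hb : b ∈ l) :
    (y b ⋏ listJoin y l) ⋏ y b = y b := by
  induction l with
  | nil => cases hb
  | cons i l ih =>
      show (y b ⋏ (y i ⋎ listJoin y l)) ⋏ y b = y b
      rcases List.mem_cons.1 hb with hbi | hbl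
      · subst hbi
        rw [absorb1, widem]
      · rw [sdistrib1, sdistrib2, wedge_assoc, ih hbl, ← wedge_assoc]
        exact absorb4 _ _

theorem pre_listMeet (y : Fin n → T) {l : List (Fin n)} {s : T}
    (h : ∀ b ∈ l, (s ⋏ y b) ⋏ s = s) (hl : l ≠ []) :
    (s ⋏ listMeet y l) ⋏ s = s := by
  induction l with
  | nil => exact absurd rfl hl
  | cons i l ih =>
      cases l with
      | nil => exact h i (List.mem_cons_self)
      | cons j l' =>
          show (s ⋏ (y i ⋏ listMeet y (j :: l'))) ⋏ s = s
          exact pre_meet (h i (List.mem_cons_self))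
            (ih (fun b hb => h b (List.mem_cons_of_mem i hb)) (by simp))

theorem orth_listJoin (y : Fin n → T) {l : List (Fin n)} {s : T}
    (h : ∀ b ∈ l, Orth s (y b)) : Orth s (listJoin y l) := by
  induction l with
  | nil =>
      exact ⟨wedge_zero s, zero_wedge s⟩
  | cons i l ih =>
      exact orth_join (h i (List.mem_cons_self))
        (ih (fun b hb => h b (List.mem_cons_of_mem i hb)))

end Terms

section Atoms

variable {T : Type v} [SBA T] {n : ℕ} (y : Fin n → T)

/-- The atom associated to a nonempty subset `A` of generators. -/
def eAt (A : Finset (Fin n)) : T :=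
  listMeet y (A.sort (· ≤ ·)) ∖ listJoin y ((Aᶜ).sort (· ≤ ·))

theorem eAt_pre {A : Finset (Fin n)} {b : Fin n} (hb : b ∈ A) :
    (eAt y A ⋏ y b) ⋏ eAt y A = eAt y A := by
  have hD := listMeet_pre y (l := A.sort (· ≤ ·)) (b := b) ((Finset.mem_sort _).2 hb)
  exact le_pre_trans (diff_le1 _ _) (diff_le2 _ _) hD

theorem eAt_orth_gen {A : Finset (Fin n)} {b : Fin n} (hb : b ∉ A) :
    Orth (eAt y A) (y b) := by
  have hbc : b ∈ (Aᶜ).sort (· ≤ ·) := (Finset.mem_sort _).2 (Finset.mem_compl.2 hb)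
  have hz := listJoin_pre y hbc
  exact ⟨KK1 hz, KK2 hz⟩

theorem orth_kill {e f u : T} (hf : (f ⋏ u) ⋏ f = f) (h1 : u ⋏ e = SBA.zero) :
    e ⋏ f = SBA.zero := by
  calc e ⋏ f = e ⋏ ((f ⋏ u) ⋏ f) := by rw [hf]
    _ = ((e ⋏ f) ⋏ u) ⋏ f := by simp only [wedge_assoc]
    _ = SBA.zero := by rw [O2 h1 f, zero_wedge]

theorem orth_kill' {e f u : T} (hf : (f ⋏ u) ⋏ f = f) (h2 : e ⋏ u = SBA.zero) :
    f ⋏ e = SBA.zero := by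
  calc f ⋏ e = ((f ⋏ u) ⋏ f) ⋏ e := by rw [hf]
    _ = f ⋏ ((u ⋏ f) ⋏ e) := by simp only [wedge_assoc]
    _ = SBA.zero := by rw [O2 h2 f, wedge_zero]

theorem eAt_orth_aux {A B : Finset (Fin n)} {j : Fin n} (hjA : j ∈ A) (hjB : j ∉ B) :
    Orth (eAt y A) (eAt y B) :=
  ⟨orth_kill' (eAt_pre y hjA) (eAt_orth_gen y hjB).1,
   orth_kill (eAt_pre y hjA) (eAt_orth_gen y hjB).2⟩

theorem eAt_orth {A B : Finset (Fin n)} (hAB : A ≠ B) :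
    Orth (eAt y A) (eAt y B) := by
  have : ¬(A ⊆ B) ∨ ¬(B ⊆ A) := by
    by_contra h
    push_neg at h
    exact hAB (Finset.Subset.antisymm h.1 h.2)
  rcases this with h | h
  · obtain ⟨j, hjA, hjB⟩ := Finset.not_subset.1 h
    exact eAt_orth_aux y hjA hjB
  · obtain ⟨j, hjB, hjA⟩ := Finset.not_subset.1 h
    exact (eAt_orth_aux y hjB hjA).symm

theorem cw {A : Finset (Fin n)} {b a' : Fin n} (hb : b ∈ A) (ha' : a' ∈ A)
    (a b' : Fin n) :
    ((y a ⋏ eAt y A) ⋏ y b) ⋏ ((y a' ⋏ eAt y A) ⋏ y b') = (y a ⋏ eAt y A) ⋏ y b' := by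
  have hQ : (eAt y A ⋏ (y b ⋏ y a')) ⋏ eAt y A = eAt y A :=
    pre_meet (eAt_pre y hb) (eAt_pre y ha')
  calc ((y a ⋏ eAt y A) ⋏ y b) ⋏ ((y a' ⋏ eAt y A) ⋏ y b')
      = (y a ⋏ ((eAt y A ⋏ (y b ⋏ y a')) ⋏ eAt y A)) ⋏ y b' := by simp only [wedge_assoc]
    _ = (y a ⋏ eAt y A) ⋏ y b' := by rw [hQ]

theorem cv {A : Finset (Fin n)} {a b a' b' : Fin n} (ha : a ∈ A) (hb : b ∈ A)
    (ha' : a' ∈ A) (hb' : b' ∈ A) :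
    ((y a ⋏ eAt y A) ⋏ y b) ⋎ ((y a' ⋏ eAt y A) ⋏ y b') = (y a' ⋏ eAt y A) ⋏ y b := by
  have hp : (((y a ⋏ eAt y A) ⋏ y b) ⋏ ((y a' ⋏ eAt y A) ⋏ y b')) ⋏
      ((y a ⋏ eAt y A) ⋏ y b) = (y a ⋏ eAt y A) ⋏ y b := by
    rw [cw y hb ha', cw y hb' ha]
  have hq : (((y a' ⋏ eAt y A) ⋏ y b') ⋏ ((y a ⋏ eAt y A) ⋏ y b)) ⋏
      ((y a' ⋏ eAt y A) ⋏ y b') = (y a' ⋏ eAt y A) ⋏ y b' := by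
    rw [cw y hb' ha, cw y hb ha']
  exact (join_of_Drel hp hq).trans (cw y hb' ha _ _)

theorem c_orth_raw {A B : Finset (Fin n)} (hAB : A ≠ B) (a b a' b' : Fin n) :
    ((y a ⋏ eAt y A) ⋏ y b) ⋏ ((y a' ⋏ eAt y B) ⋏ y b') = SBA.zero := by
  have h0 : (eAt y A ⋏ (y b ⋏ y a')) ⋏ eAt y B = SBA.zero :=
    O2 (eAt_orth y hAB).2 (y b ⋏ y a')
  calc ((y a ⋏ eAt y A) ⋏ y b) ⋏ ((y a' ⋏ eAt y B) ⋏ y b')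
      = (y a ⋏ ((eAt y A ⋏ (y b ⋏ y a')) ⋏ eAt y B)) ⋏ y b' := by simp only [wedge_assoc]
    _ = (y a ⋏ SBA.zero) ⋏ y b' := by rw [h0]
    _ = SBA.zero := by rw [wedge_zero, zero_wedge]

end Atoms

/-! ### The model and the normal-form map -/

abbrev idx (n : ℕ) := {A : Finset (Fin n) // A.Nonempty}

abbrev M0 (n : ℕ) : Type := ∀ A : idx n, Prim {a : Fin n // a ∈ A.1}

/-- A fixed enumeration of the nonempty subsets of `Fin n`. -/
noncomputable def LL (n : ℕ) : List (idx n) := (Finset.univ : Finset (idx n)).toList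

theorem LL_nodup (n : ℕ) : (LL n).Nodup := Finset.nodup_toList _

theorem mem_LL {n : ℕ} (A : idx n) : A ∈ LL n := Finset.mem_toList.2 (Finset.mem_univ _)

def projp {n : ℕ} {A : Finset (Fin n)} (p : Prim {a : Fin n // a ∈ A}) :
    Option (Fin n × Fin n) :=
  Option.map (fun q => (q.1.1, q.2.1)) p

section TS

variable {T : Type v} [SBA T] {n : ℕ} (y : Fin n → T)

def cA (A : Finset (Fin n)) : Option (Fin n × Fin n) → T
  | none => SBA.zero
  | some (a, b) => (y a ⋏ eAt y A) ⋏ y b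

/-- The normal-form map from the model into `T`. -/
noncomputable def tS (m : M0 n) : T :=
  joinList ((LL n).map (fun A => cA y A.1 (projp (m A))))

theorem cA_w (A : idx n) (P Q : Prim {a : Fin n // a ∈ A.1}) :
    cA y A.1 (projp P) ⋏ cA y A.1 (projp Q) = cA y A.1 (projp (P ⋏ Q)) := by
  match P, Q with
  | none, Q => exact zero_wedge _
  | some p, none => exact wedge_zero _
  | some p, some q =>
      show ((y p.1.1 ⋏ eAt y A.1) ⋏ y p.2.1) ⋏ ((y q.1.1 ⋏ eAt y A.1) ⋏ y q.2.1)
        = (y p.1.1 ⋏ eAt y A.1) ⋏ y q.2.1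
      exact cw y p.2.2 q.1.2 _ _

theorem cA_v (A : idx n) (P Q : Prim {a : Fin n // a ∈ A.1}) :
    cA y A.1 (projp P) ⋎ cA y A.1 (projp Q) = cA y A.1 (projp (P ⋎ Q)) := by
  match P, Q with
  | none, Q =>
      show SBA.zero ⋎ cA y A.1 (projp Q) = cA y A.1 (projp Q)
      exact zero_vee _
  | some p, none =>
      show cA y A.1 (projp (some p)) ⋎ SBA.zero = cA y A.1 (projp (some p))
      exact vee_zero _
  | some p, some q =>
      show ((y p.1.1 ⋏ eAt y A.1) ⋏ y p.2.1) ⋎ ((y q.1.1 ⋏ eAt y A.1) ⋏ y q.2.1)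
        = (y q.1.1 ⋏ eAt y A.1) ⋏ y p.2.1
      exact cv y p.1.2 p.2.2 q.1.2 q.2.2

theorem cA_orth {A B : idx n} (hAB : A ≠ B) (P : Prim {a : Fin n // a ∈ A.1})
    (Q : Prim {a : Fin n // a ∈ B.1}) :
    Orth (cA y A.1 (projp P)) (cA y B.1 (projp Q)) := by
  have h1 : A.1 ≠ B.1 := fun h' => hAB (Subtype.ext h')
  match P, Q with
  | none, Q => exact orth_zero_left _
  | some p, none =>
      exact ⟨wedge_zero _, zero_wedge _⟩
  | some p, some q =>
      exact ⟨c_orth_raw y h1 _ _ _ _, c_orth_raw y h1.symm _ _ _ _⟩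

theorem tS_wedge (m m' : M0 n) : tS y m ⋏ tS y m' = tS y (m ⋏ m') := by
  unfold tS
  rw [joinList_wedge_joinList (LL n) (LL_nodup n) _ _
    (fun A _ B _ hAB => cA_orth y hAB (m A) (m' B))]
  exact joinList_map_congr (fun A _ => cA_w y A (m A) (m' A))

theorem tS_vee (m m' : M0 n) : tS y m ⋎ tS y m' = tS y (m ⋎ m') := by
  unfold tS
  rw [joinList_vee_joinList (LL n) (LL_nodup n) _ _
    (fun A _ B _ hAB => cA_orth y hAB (m A) (m' B))]
  exact joinList_map_congr (fun A _ => cA_v y A (m A) (m' A))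

theorem tS_zero : tS y (SBA.zero : M0 n) = SBA.zero := by
  apply joinList_eq_zero
  intro t ht
  obtain ⟨A, _, rfl⟩ := List.mem_map.1 ht
  rfl

theorem tS_diff (m m' : M0 n) : tS y m ∖ tS y m' = tS y (m ∖ m') := by
  have hu : (tS y m ⋏ tS y m') ⋏ tS y m = tS y ((m ⋏ m') ⋏ m) := by
    rw [tS_wedge, tS_wedge]
  have hx : tS y m = tS y ((m ⋏ m') ⋏ m) ⋎ tS y (m ∖ m') := by
    rw [tS_vee, diff_ax1]
  have h1 : tS y ((m ⋏ m') ⋏ m) ⋏ tS y (m ∖ m') = SBA.zero := by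
    rw [tS_wedge, diff_ax2, tS_zero]
  have h2 : tS y (m ∖ m') ⋏ tS y ((m ⋏ m') ⋏ m) = SBA.zero := by
    rw [tS_wedge, diff_ax3, tS_zero]
  have d1 := diff_ax1 (tS y m) (tS y m')
  rw [hu] at d1
  have d2 := diff_ax2 (tS y m) (tS y m')
  rw [hu] at d2
  have d3 := diff_ax3 (tS y m) (tS y m')
  rw [hu] at d3
  exact (uniq hx h1 h2 d1.symm d2 d3).symm

end TS

/-- Homomorphism predicate across universes. -/
def IsHom2 {T : Type v} {T' : Type w} [SBA T] [SBA T'] (f : T → T') : Prop :=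
  (∀ a b : T, f (a ⋏ b) = f a ⋏ f b) ∧ (∀ a b : T, f (a ⋎ b) = f a ⋎ f b) ∧
    (∀ a b : T, f (a ∖ b) = f a ∖ f b) ∧ f SBA.zero = SBA.zero

theorem IsHom.toIsHom2 {T T' : Type u} [SBA T] [SBA T'] {f : T → T'} (h : IsHom f) :
    IsHom2 f := ⟨h.1, h.2.1, h.2.2.1, h.2.2.2⟩

section HomTransport

variable {T : Type v} {T' : Type w} [SBA T] [SBA T'] {n : ℕ}
variable {f : T → T'} (y : Fin n → T)

theorem hom_listMeet (hf : IsHom2 f) (l : List (Fin n)) : f (listMeet y l) = listMeet (f ∘ y) l := by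
  induction l with
  | nil => exact hf.2.2.2
  | cons i l ih =>
      cases l with
      | nil => rfl
      | cons j l' =>
          show f (y i ⋏ listMeet y (j :: l')) = (f ∘ y) i ⋏ listMeet (f ∘ y) (j :: l')
          rw [hf.1, ih]
          rfl

theorem hom_listJoin (hf : IsHom2 f) (l : List (Fin n)) : f (listJoin y l) = listJoin (f ∘ y) l := by
  induction l with
  | nil => exact hf.2.2.2
  | cons i l ih =>
      show f (y i ⋎ listJoin y l) = (f ∘ y) i ⋎ listJoin (f ∘ y) l
      rw [hf.2.1, ih]
      rfl

theorem hom_eAt (hf : IsHom2 f) (A : Finset (Fin n)) : f (eAt y A) = eAt (f ∘ y) A := by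
  unfold eAt
  rw [hf.2.2.1, hom_listMeet y hf, hom_listJoin y hf]

theorem hom_cA (hf : IsHom2 f) (A : Finset (Fin n)) (o : Option (Fin n × Fin n)) :
    f (cA y A o) = cA (f ∘ y) A o := by
  match o with
  | none => exact hf.2.2.2
  | some (a, b) =>
      show f ((y a ⋏ eAt y A) ⋏ y b) = ((f ∘ y) a ⋏ eAt (f ∘ y) A) ⋏ (f ∘ y) b
      rw [hf.1, hf.1, hom_eAt y hf]
      rfl

theorem hom_joinList (hf : IsHom2 f) (L : List T) : f (joinList L) = joinList (L.map f) := by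
  induction L with
  | nil => exact hf.2.2.2
  | cons a L ih =>
      show f (a ⋎ joinList L) = f a ⋎ joinList (L.map f)
      rw [hf.2.1, ih]

theorem hom_tS (hf : IsHom2 f) (m : M0 n) : f (tS y m) = tS (f ∘ y) m := by
  unfold tS
  rw [hom_joinList hf, List.map_map]
  exact joinList_map_congr (fun A _ => hom_cA y hf A.1 (projp (m A)))

end HomTransport

/-! ### The generator identity: `tS y (XM i) = y i` -/

/-- The canonical generators of the model. -/
def XM (n : ℕ) (i : Fin n) : M0 n := fun A =>
  if h : i ∈ A.1 then some (⟨i, h⟩, ⟨i, h⟩) else none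

section PU

variable {T : Type v} [SBA T] {n : ℕ} (y : Fin n → T)

theorem pre_joinList {z t : T} {L : List T} (ht : t ∈ L) (hz : (z ⋏ t) ⋏ z = z) :
    (z ⋏ joinList L) ⋏ z = z := by
  induction L with
  | nil => cases ht
  | cons a L ih =>
      show (z ⋏ (a ⋎ joinList L)) ⋏ z = z
      rcases List.mem_cons.1 ht with h | h
      · subst h
        rw [sdistrib1, sdistrib2, hz, wedge_assoc z (joinList L) z]
        exact absorb3 _ _
      · rw [sdistrib1, sdistrib2, ih h]
        exact absorb4 _ _

theorem orth_of_le {a s w : T} (h1 : a ⋏ s = a) (h2 : s ⋏ a = a) (ho : Orth s w) :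
    Orth a w :=
  ⟨by rw [← h1, wedge_assoc, ho.1, wedge_zero],
   by rw [← h2, ← wedge_assoc, ho.2, zero_wedge]⟩

theorem sand_self (s u : T) : (((s ⋏ u) ⋏ s) ⋏ u) ⋏ ((s ⋏ u) ⋏ s) = (s ⋏ u) ⋏ s := by
  have h : (((s ⋏ u) ⋏ s) ⋏ u) ⋏ ((s ⋏ u) ⋏ s)
      = (((s ⋏ u) ⋏ (s ⋏ u)) ⋏ (s ⋏ u)) ⋏ s := by simp only [wedge_assoc]
  rw [h, widem, widem]

theorem sand_le1 (s u : T) : ((s ⋏ u) ⋏ s) ⋏ s = (s ⋏ u) ⋏ s := by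
  rw [wedge_assoc, widem]

theorem sand_le2 (s u : T) : s ⋏ ((s ⋏ u) ⋏ s) = (s ⋏ u) ⋏ s := by
  have h : s ⋏ ((s ⋏ u) ⋏ s) = ((s ⋏ s) ⋏ u) ⋏ s := by simp only [wedge_assoc]
  rw [h, widem]

/-- Recursive binary splitting of an element along generators. -/
def pieces : T → List (Fin n) → List T
  | s, [] => [s]
  | s, j :: l => pieces ((s ⋏ y j) ⋏ s) l ++ pieces (s ∖ y j) l

theorem joinList_pieces (l : List (Fin n)) (s : T) :
    joinList (pieces y s l) = s := by
  induction l generalizing s with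
  | nil => exact vee_zero s
  | cons j l ih =>
      show joinList (pieces y ((s ⋏ y j) ⋏ s) l ++ pieces y (s ∖ y j) l) = s
      rw [joinList_append, ih, ih]
      exact diff_ax1 s (y j)

theorem pieces_kill {i : Fin n} {r : T}
    (hr : ∀ A : idx n, i ∈ A.1 → Orth r (eAt y A.1)) :
    ∀ (l : List (Fin n)) (s : T) (Tt : Finset (Fin n)), i ∈ Tt →
    (∀ k ∈ Tt, (s ⋏ y k) ⋏ s = s) →
    (∀ j, j ∉ Tt → j ∉ l → Orth s (y j)) →
    ∀ p ∈ pieces y s l, r ⋏ p = SBA.zero := by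
  intro l
  induction l with
  | nil =>
      intro s Tt hi hT hK p hp
      have hps : p = s := by simpa [pieces] using hp
      subst hps
      -- leaf: s ≼ e_{Tt}
      have hTne : Tt.Nonempty := ⟨i, hi⟩
      have hsort : Tt.sort (· ≤ ·) ≠ [] := by
        intro h
        have := (Finset.mem_sort (α := Fin n) (· ≤ ·)).2 hi
        rw [h] at this
        cases this
      have hsD : (p ⋏ listMeet y (Tt.sort (· ≤ ·))) ⋏ p = p := by
        apply pre_listMeet y _ hsort
        intro b hb
        exact hT b ((Finset.mem_sort _).1 hb)
      have hsJ : Orth p (listJoin y ((Ttᶜ).sort (· ≤ ·))) := by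
        apply orth_listJoin
        intro b hb
        exact hK b (Finset.mem_compl.1 ((Finset.mem_sort _).1 hb)) (by simp)
      have hse : (p ⋏ eAt y Tt) ⋏ p = p := presub hsD hsJ.1 hsJ.2
      have hre : Orth r (eAt y Tt) := hr ⟨Tt, hTne⟩ hi
      calc r ⋏ p = r ⋏ ((p ⋏ eAt y Tt) ⋏ p) := by rw [hse]
        _ = ((r ⋏ p) ⋏ eAt y Tt) ⋏ p := by simp only [wedge_assoc]
        _ = SBA.zero := by rw [O2 hre.2 p, zero_wedge]
  | cons j l ih =>
      intro s Tt hi hT hK p hp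
      rcases List.mem_append.1 hp with hp1 | hp2
      · -- the branch s' = (s ⋏ y j) ⋏ s
        refine ih ((s ⋏ y j) ⋏ s) (insert j Tt) (Finset.mem_insert_of_mem hi) ?_ ?_ p hp1
        · intro k hk
          rcases Finset.mem_insert.1 hk with hk | hk
          · subst hk; exact sand_self s (y k)
          · exact le_pre_trans (sand_le1 s (y j)) (sand_le2 s (y j)) (hT k hk)
        · intro j' hj'T hj'l
          have hj'j : j' ≠ j := fun h => hj'T (h ▸ Finset.mem_insert_self j Tt)
          have := hK j' (fun h => hj'T (Finset.mem_insert_of_mem h))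
            (by simp [hj'j, hj'l])
          exact orth_of_le (sand_le1 s (y j)) (sand_le2 s (y j)) this
      · -- the branch s'' = s ∖ y j
        refine ih (s ∖ y j) Tt hi ?_ ?_ p hp2
        · intro k hk
          exact le_pre_trans (diff_le1 s (y j)) (diff_le2 s (y j)) (hT k hk)
        · intro j' hj'T hj'l
          by_cases hj'j : j' = j
          · subst hj'j
            exact ⟨K1 s (y j'), K2 s (y j')⟩
          · exact orth_of_le (diff_le1 s (y j)) (diff_le2 s (y j))
              (hK j' hj'T (by simp [hj'j, hj'l]))

theorem wedge_joinList_id {r : T} {L : List T} (h : ∀ t ∈ L, r ⋏ t = t) :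
    r ⋏ joinList L = joinList L := by
  rw [wedge_joinList]
  rw [show L.map (fun t => r ⋏ t) = L.map id from List.map_congr_left h]
  rw [List.map_id]

theorem joinList_wedge_id {r : T} {L : List T} (h : ∀ t ∈ L, t ⋏ r = t) :
    joinList L ⋏ r = joinList L := by
  rw [joinList_wedge]
  rw [show L.map (fun t => t ⋏ r) = L.map id from List.map_congr_left h]
  rw [List.map_id]

/-- The key generator identity. -/
theorem tS_XM (i : Fin n) : tS y (XM n i) = y i := by
  set g : idx n → T := fun A => cA y A.1 (projp (XM n i A)) with hg
  have hgval : ∀ A : idx n, i ∈ A.1 → g A = (y i ⋏ eAt y A.1) ⋏ y i := by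
    intro A hiA
    have e : XM n i A = some (⟨i, hiA⟩, ⟨i, hiA⟩) := dif_pos hiA
    show cA y A.1 (projp (XM n i A)) = _
    rw [e]
    rfl
  have hgval' : ∀ A : idx n, i ∉ A.1 → g A = SBA.zero := by
    intro A hiA
    have e : XM n i A = none := dif_neg hiA
    show cA y A.1 (projp (XM n i A)) = _
    rw [e]
    rfl
  have htS : tS y (XM n i) = joinList ((LL n).map g) := rfl
  -- every atom e_A with i ∈ A sits below the join E
  have hr : ∀ A : idx n, i ∈ A.1 →
      Orth (y i ∖ joinList ((LL n).map g)) (eAt y A.1) := by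
    intro A hiA
    have hterm : (eAt y A.1 ⋏ g A) ⋏ eAt y A.1 = eAt y A.1 := by
      rw [hgval A hiA, wedge_assoc (y i) (eAt y A.1) (y i)]
      refine pre_meet (eAt_pre y hiA) ?_
      have h1 : (eAt y A.1 ⋏ (eAt y A.1 ⋏ y i)) ⋏ eAt y A.1
          = ((eAt y A.1 ⋏ eAt y A.1) ⋏ y i) ⋏ eAt y A.1 := by simp only [wedge_assoc]
      rw [h1, widem]
      exact eAt_pre y hiA
    have hzE : (eAt y A.1 ⋏ joinList ((LL n).map g)) ⋏ eAt y A.1 = eAt y A.1 :=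
      pre_joinList (List.mem_map.2 ⟨A, mem_LL A, rfl⟩) hterm
    exact ⟨KK1 hzE, KK2 hzE⟩
  -- r := y i ∖ E kills all pieces of y i
  have hkill := pieces_kill y hr ((Finset.univ.erase i).sort (· ≤ ·)) (y i) {i}
    (Finset.mem_singleton_self i)
    (fun k hk => by
      rw [Finset.mem_singleton.1 hk, widem, widem])
    (fun j hjT hjl => by
      exfalso
      apply hjl
      rw [Finset.mem_sort]
      exact Finset.mem_erase.2 ⟨fun h => hjT (Finset.mem_singleton.2 h), Finset.mem_univ j⟩)
  have hr0 : y i ∖ joinList ((LL n).map g) = SBA.zero := by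
    have h1 : y i ∖ joinList ((LL n).map g)
        = (y i ∖ joinList ((LL n).map g)) ⋏ y i := (diff_le1 _ _).symm
    have h2 : (y i ∖ joinList ((LL n).map g)) ⋏ y i
        = (y i ∖ joinList ((LL n).map g))
          ⋏ joinList (pieces y (y i) ((Finset.univ.erase i).sort (· ≤ ·))) := by
      rw [joinList_pieces]
    rw [h1, h2, wedge_joinList]
    apply joinList_eq_zero
    intro t ht
    obtain ⟨p, hp, rfl⟩ := List.mem_map.1 ht
    exact hkill p hp
  have hsand := diff0 hr0
  -- each summand is a sandwich by y i
  have hid1 : ∀ t ∈ (LL n).map g, y i ⋏ t = t := by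
    intro t ht
    obtain ⟨A, _, rfl⟩ := List.mem_map.1 ht
    by_cases hiA : i ∈ A.1
    · rw [hgval A hiA]
      have h1 : y i ⋏ ((y i ⋏ eAt y A.1) ⋏ y i)
          = ((y i ⋏ y i) ⋏ eAt y A.1) ⋏ y i := by simp only [wedge_assoc]
      rw [h1, widem]
    · rw [hgval' A hiA, wedge_zero]
  have hid2 : ∀ t ∈ (LL n).map g, t ⋏ y i = t := by
    intro t ht
    obtain ⟨A, _, rfl⟩ := List.mem_map.1 ht
    by_cases hiA : i ∈ A.1
    · rw [hgval A hiA, wedge_assoc, widem]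
    · rw [hgval' A hiA, zero_wedge]
  rw [htS]
  calc joinList ((LL n).map g)
      = (y i ⋏ joinList ((LL n).map g)) ⋏ y i := by
        rw [wedge_joinList_id hid1, joinList_wedge_id hid2]
    _ = y i := hsand

end PU

/-! ### Evaluation of the normal-form map inside the model -/

section ModelComp

variable {n : ℕ}

theorem joinList_single {T : Type v} [SBA T] {ι' : Type w} {L : List ι'} {B : ι'}
    (hN : L.Nodup) (hB : B ∈ L) (f : ι' → T)
    (h0 : ∀ A ∈ L, A ≠ B → f A = SBA.zero) : joinList (L.map f) = f B := by
  induction L with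
  | nil => cases hB
  | cons a L ih =>
      have hNa : a ∉ L := (List.nodup_cons.1 hN).1
      have hN' : L.Nodup := (List.nodup_cons.1 hN).2
      show f a ⋎ joinList (L.map f) = f B
      rcases List.mem_cons.1 hB with h | h
      · subst h
        have : joinList (L.map f) = SBA.zero := by
          apply joinList_eq_zero
          intro t ht
          obtain ⟨A, hA, rfl⟩ := List.mem_map.1 ht
          exact h0 A (List.mem_cons_of_mem _ hA) (fun hAB => hNa (hAB ▸ hA))
        rw [this, vee_zero]
      · have ha : f a = SBA.zero :=
          h0 a (List.mem_cons_self) (fun hab => hNa (hab ▸ h))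
        rw [ha, zero_vee]
        exact ih hN' h (fun A hA hAB => h0 A (List.mem_cons_of_mem _ hA) hAB)

theorem listMeet_apply (y : Fin n → M0 n) (l : List (Fin n)) (B : idx n) :
    listMeet y l B = listMeet (fun i => y i B) l := by
  induction l with
  | nil => rfl
  | cons i l ih =>
      cases l with
      | nil => rfl
      | cons j l' =>
          show (y i ⋏ listMeet y (j :: l')) B = _
          show y i B ⋏ listMeet y (j :: l') B = _
          rw [ih]
          rfl

theorem listJoin_apply (y : Fin n → M0 n) (l : List (Fin n)) (B : idx n) :
    listJoin y l B = listJoin (fun i => y i B) l := by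
  induction l with
  | nil => rfl
  | cons i l ih =>
      show y i B ⋎ listJoin y l B = _
      rw [ih]
      rfl

theorem joinList_apply (L : List (M0 n)) (B : idx n) :
    joinList L B = joinList (L.map (fun t => t B)) := by
  induction L with
  | nil => rfl
  | cons a L ih =>
      show a B ⋎ joinList L B = _
      rw [ih]
      rfl

-- Prim facts
theorem pw_isSome {α : Type w} (x y : Prim α) :
    (x ⋏ y).isSome = (x.isSome && y.isSome) := by
  rcases x with _ | p <;> rcases y with _ | q <;> rfl

theorem pv_isSome {α : Type w} (x y : Prim α) :
    (x ⋎ y).isSome = (x.isSome || y.isSome) := by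
  rcases x with _ | p <;> rcases y with _ | q <;> rfl

theorem pd_some {α : Type w} (x : Prim α) (q : α × α) :
    (x ∖ (some q : Prim α)) = none := by
  rcases x with _ | p <;> rfl

theorem pd_none {α : Type w} (x : Prim α) : (x ∖ (none : Prim α)) = x := by
  rcases x with _ | p <;> rfl

theorem prim_listMeet_none {α : Type w} {f : Fin n → Prim α} {l : List (Fin n)} {j : Fin n}
    (hj : j ∈ l) (h : f j = none) : listMeet f l = none := by
  induction l with
  | nil => cases hj
  | cons i l ih =>
      cases l with
      | nil =>
          have : j = i := by simpa using hj
          show f i = none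
          rw [← this, h]
      | cons k l' =>
          show f i ⋏ listMeet f (k :: l') = none
          rcases List.mem_cons.1 hj with h1 | h1
          · rw [← h1, h]
            exact zero_wedge _
          · rw [ih h1]
            exact wedge_zero _

theorem prim_listMeet_isSome {α : Type w} {f : Fin n → Prim α} {l : List (Fin n)}
    (hl : l ≠ []) (h : ∀ j ∈ l, (f j).isSome) : (listMeet f l).isSome := by
  induction l with
  | nil => exact absurd rfl hl
  | cons i l ih =>
      cases l with
      | nil => exact h i (List.mem_cons_self)
      | cons k l' =>
          show (f i ⋏ listMeet f (k :: l')).isSome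
          rw [pw_isSome]
          have h1 := h i (List.mem_cons_self)
          have h2 := ih (by simp) (fun j hj => h j (List.mem_cons_of_mem i hj))
          rw [h1, h2]
          rfl

theorem prim_listJoin_isSome {α : Type w} {f : Fin n → Prim α} {l : List (Fin n)} {j : Fin n}
    (hj : j ∈ l) (h : (f j).isSome) : (listJoin f l).isSome := by
  induction l with
  | nil => cases hj
  | cons i l ih =>
      show (f i ⋎ listJoin f l).isSome
      rw [pv_isSome]
      rcases List.mem_cons.1 hj with h1 | h1
      · rw [← h1, h]; rfl
      · rw [ih h1]
        simp

theorem listJoin_eq_zero {T : Type v} [SBA T] {y : Fin n → T} {l : List (Fin n)}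
    (h : ∀ j ∈ l, y j = SBA.zero) : listJoin y l = SBA.zero := by
  induction l with
  | nil => rfl
  | cons i l ih =>
      show y i ⋎ listJoin y l = SBA.zero
      rw [h i (List.mem_cons_self), ih (fun j hj => h j (List.mem_cons_of_mem i hj)),
        zero_vee]

theorem XM_apply_pos {i : Fin n} {B : idx n} (h : i ∈ B.1) :
    XM n i B = some (⟨i, h⟩, ⟨i, h⟩) := by
  exact dif_pos h

theorem XM_apply_neg {i : Fin n} {B : idx n} (h : i ∉ B.1) :
    XM n i B = none := by
  exact dif_neg h

theorem eAt_model_ne {A : Finset (Fin n)} {B : idx n} (h : A ≠ B.1) :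
    eAt (XM n) A B = none := by
  show (listMeet (XM n) (A.sort (· ≤ ·)) ∖ listJoin (XM n) ((Aᶜ).sort (· ≤ ·))) B = none
  show listMeet (XM n) (A.sort (· ≤ ·)) B ∖ listJoin (XM n) ((Aᶜ).sort (· ≤ ·)) B = none
  rw [listMeet_apply, listJoin_apply]
  have : ¬(A ⊆ B.1) ∨ ¬(B.1 ⊆ A) := by
    by_contra hc
    push_neg at hc
    exact h (Finset.Subset.antisymm hc.1 hc.2)
  rcases this with h1 | h1
  · obtain ⟨j, hjA, hjB⟩ := Finset.not_subset.1 h1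
    have hm : listMeet (fun i => XM n i B) (A.sort (· ≤ ·)) = none :=
      prim_listMeet_none ((Finset.mem_sort _).2 hjA) (XM_apply_neg hjB)
    rw [hm]
    exact zero_diff _
  · obtain ⟨j, hjB, hjA⟩ := Finset.not_subset.1 h1
    have hs : (listJoin (fun i => XM n i B) ((Aᶜ).sort (· ≤ ·))).isSome := by
      apply prim_listJoin_isSome ((Finset.mem_sort _).2 (Finset.mem_compl.2 hjA))
      rw [XM_apply_pos hjB]
      rfl
    obtain ⟨q, hq⟩ := Option.isSome_iff_exists.1 hs
    rw [hq]
    exact pd_some _ q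

theorem eAt_model_self (B : idx n) : (eAt (XM n) B.1 B).isSome := by
  show ((listMeet (XM n) (B.1.sort (· ≤ ·)) ∖ listJoin (XM n) ((B.1ᶜ).sort (· ≤ ·))) B).isSome
  show (listMeet (XM n) (B.1.sort (· ≤ ·)) B ∖ listJoin (XM n) ((B.1ᶜ).sort (· ≤ ·)) B).isSome
  rw [listMeet_apply, listJoin_apply]
  have hJ : listJoin (fun i => XM n i B) ((B.1ᶜ).sort (· ≤ ·)) = none := by
    apply listJoin_eq_zero
    intro j hj
    exact XM_apply_neg (Finset.mem_compl.1 ((Finset.mem_sort _).1 hj))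
  rw [hJ, pd_none]
  apply prim_listMeet_isSome
  · intro hnil
    obtain ⟨i, hi⟩ := B.2
    have := (Finset.mem_sort (α := Fin n) (· ≤ ·)).2 hi
    rw [hnil] at this
    cases this
  · intro j hj
    rw [XM_apply_pos ((Finset.mem_sort _).1 hj)]
    rfl

theorem cA_model_ne {A B : idx n} (h : A ≠ B) (o : Prim {a : Fin n // a ∈ A.1}) :
    cA (XM n) A.1 (projp o) B = none := by
  have h1 : A.1 ≠ B.1 := fun h' => h (Subtype.ext h')
  match o with
  | none => rfl
  | some p =>
      show ((XM n p.1.1 ⋏ eAt (XM n) A.1) ⋏ XM n p.2.1) B = none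
      show (XM n p.1.1 B ⋏ eAt (XM n) A.1 B) ⋏ XM n p.2.1 B = none
      rw [eAt_model_ne h1]
      rcases XM n (p.1.1) B with _ | u <;> rcases XM n (p.2.1) B with _ | v <;> rfl

theorem cA_model_self (B : idx n) (o : Prim {a : Fin n // a ∈ B.1}) :
    cA (XM n) B.1 (projp o) B = o := by
  match o with
  | none => rfl
  | some p =>
      show ((XM n p.1.1 ⋏ eAt (XM n) B.1) ⋏ XM n p.2.1) B = some p
      show (XM n p.1.1 B ⋏ eAt (XM n) B.1 B) ⋏ XM n p.2.1 B = some p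
      obtain ⟨q, hq⟩ := Option.isSome_iff_exists.1 (eAt_model_self B)
      rw [XM_apply_pos p.1.2, XM_apply_pos p.2.2, hq]
      rfl

/-- Evaluating the normal form map inside the model is the identity. -/
theorem tS_model (m : M0 n) : tS (XM n) m = m := by
  funext B
  show joinList ((LL n).map (fun A => cA (XM n) A.1 (projp (m A)))) B = m B
  rw [joinList_apply, List.map_map]
  have hs := joinList_single (LL_nodup n) (mem_LL B)
    (fun A : idx n => cA (XM n) A.1 (projp (m A)) B)
    (fun A _ hAB => cA_model_ne hAB (m A))
  exact hs.trans (cA_model_self B (m B))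

end ModelComp

/-! ### Cardinality of the model -/

section Card

variable {n : ℕ}

instance primFintype {α : Type w} [Fintype α] : Fintype (Prim α) :=
  inferInstanceAs (Fintype (Option (α × α)))

theorem card_Prim (α : Type w) [Fintype α] :
    Fintype.card (Prim α) = Fintype.card α ^ 2 + 1 := by
  show Fintype.card (Option (α × α)) = _
  rw [Fintype.card_option, Fintype.card_prod, sq]

theorem card_M0 (n : ℕ) :
    Fintype.card (M0 n) = ∏ m ∈ Finset.Icc 1 n, (m ^ 2 + 1) ^ n.choose m := by
  rw [Fintype.card_pi]
  have h1 : ∀ A : idx n, Fintype.card (Prim {a : Fin n // a ∈ A.1}) = A.1.card ^ 2 + 1 := by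
    intro A
    rw [card_Prim, Fintype.card_coe]
  rw [Finset.prod_congr rfl (fun A _ => h1 A)]
  have h2 : ∏ A : idx n, (A.1.card ^ 2 + 1)
      = ∏ A ∈ Finset.univ.filter (fun A : Finset (Fin n) => A.Nonempty),
          (A.card ^ 2 + 1) := by
    rw [← Finset.prod_subtype (Finset.univ.filter (fun A : Finset (Fin n) => A.Nonempty))
      (fun A => by simp) (fun A : Finset (Fin n) => A.card ^ 2 + 1)]
  rw [h2, Finset.prod_filter]
  have h3 : ∀ A : Finset (Fin n),
      (if A.Nonempty then A.card ^ 2 + 1 else 1) = A.card ^ 2 + 1 := by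
    intro A
    by_cases hA : A.Nonempty
    · rw [if_pos hA]
    · rw [if_neg hA, Finset.not_nonempty_iff_eq_empty.1 hA]
      simp
  rw [Finset.prod_congr rfl (fun A _ => h3 A)]
  have h4 : (Finset.univ : Finset (Finset (Fin n)))
      = (Finset.univ : Finset (Fin n)).powerset := (Finset.powerset_univ).symm
  rw [h4, Finset.prod_powerset]
  have h5 : ∀ j ∈ Finset.range ((Finset.univ : Finset (Fin n)).card + 1),
      ∏ t ∈ Finset.powersetCard j (Finset.univ : Finset (Fin n)), (t.card ^ 2 + 1)
        = (j ^ 2 + 1) ^ n.choose j := by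
    intro j _
    have : ∀ t ∈ Finset.powersetCard j (Finset.univ : Finset (Fin n)),
        t.card ^ 2 + 1 = j ^ 2 + 1 := by
      intro t ht
      rw [(Finset.mem_powersetCard.1 ht).2]
    rw [Finset.prod_congr rfl this, Finset.prod_const, Finset.card_powersetCard,
      Finset.card_univ, Fintype.card_fin]
  rw [Finset.prod_congr rfl h5, Finset.card_univ, Fintype.card_fin]
  have h6 : Finset.range (n + 1) = insert 0 (Finset.Icc 1 n) := by
    ext j
    simp [Nat.lt_succ_iff]
    omega
  rw [h6, Finset.prod_insert (by simp)]
  simp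

end Card
theorem stmt7 (n : ℕ) (hn : 1 ≤ n) (S : Type u) [SBA S]
    (x : Fin n → S) (hinj : Function.Injective x)
    (hfree : FreelyGenerates S (Set.range x)) :
    Finite S ∧ Nat.card S = ∏ m ∈ Finset.Icc 1 n, (m ^ 2 + 1) ^ n.choose m := by
  classical
  obtain ⟨hgen, hfp⟩ := hfree
  have hmem : ∀ i : Fin n, x i ∈ Set.range x := fun i => ⟨i, rfl⟩
  obtain ⟨φ, hφ, hφg⟩ := hfp (ULift.{u} (M0 n))
    (fun z => ULift.up (XM n (Classical.choose z.2)))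
  have hφx : ∀ i : Fin n, φ (x i) = ULift.up (XM n i) := by
    intro i
    have h1 := hφg ⟨x i, hmem i⟩
    have h3 : Classical.choose (hmem i) = i := hinj (Classical.choose_spec (hmem i))
    rw [h1]
    show ULift.up (XM n (Classical.choose (hmem i))) = _
    rw [h3]
  have hφ2 : IsHom2 φ := IsHom.toIsHom2 hφ
  have hup : IsHom2 (ULift.up : M0 n → ULift.{u} (M0 n)) :=
    ⟨fun a b => rfl, fun a b => rfl, fun a b => rfl, rfl⟩
  have hτφ : ∀ s : S, tS x (φ s).down = s := by
    have hset := hgen {s : S | tS x (φ s).down = s} ?_ ?_ ?_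
    · intro s
      have : s ∈ {s : S | tS x (φ s).down = s} := hset.symm ▸ Set.mem_univ s
      exact this
    · rintro z ⟨i, rfl⟩
      show tS x (φ (x i)).down = x i
      rw [hφx i]
      exact tS_XM x i
    · show tS x (φ SBA.zero).down = SBA.zero
      rw [hφ.2.2.2]
      exact tS_zero x
    · intro a b ha hb
      refine ⟨?_, ?_, ?_⟩
      · show tS x (φ (a ⋏ b)).down = a ⋏ b
        rw [hφ.1]
        show tS x ((φ a).down ⋏ (φ b).down) = a ⋏ b
        rw [← tS_wedge, ha, hb]
      · show tS x (φ (a ⋎ b)).down = a ⋎ b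
        rw [hφ.2.1]
        show tS x ((φ a).down ⋎ (φ b).down) = a ⋎ b
        rw [← tS_vee, ha, hb]
      · show tS x (φ (a ∖ b)).down = a ∖ b
        rw [hφ.2.2.1]
        show tS x ((φ a).down ∖ (φ b).down) = a ∖ b
        rw [← tS_diff, ha, hb]
  have hφτ : ∀ mm : ULift.{u} (M0 n), φ (tS x mm.down) = mm := by
    intro mm
    rw [hom_tS x hφ2 mm.down]
    have hfx : φ ∘ x = (ULift.up ∘ XM n) := funext hφx
    rw [hfx, ← hom_tS (XM n) hup mm.down, tS_model]
  have hbij : Function.Bijective φ :=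
    ⟨fun a b h => by rw [← hτφ a, ← hτφ b, h],
     fun mm => ⟨tS x mm.down, hφτ mm⟩⟩
  have hfin : Finite S := Finite.of_injective φ hbij.1
  refine ⟨hfin, ?_⟩
  rw [Nat.card_eq_of_bijective φ hbij, Nat.card_congr Equiv.ulift,
    Nat.card_eq_fintype_card, card_M0]
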